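/- Let 𝒜 be a pre-2-filtered 2-category and F a pseudofunctor from 𝒜 to Cat. Let ξ₁, ξ₂ : (A, x) → (B, y) and ζ₁, ζ₂ : (B, y) → (C, z) be premorphisms, and suppose given homotopies (α, β) : ξ₁ ⇒ ξ₂ and (ε, δ) : ζ₁ ⇒ ζ₂. Then for any two composite premorphisms ζ₁ ∘_{γ₁} ξ₁ and ζ₂ ∘_{γ₂} ξ₂ (formed with respect to any invertible 2-cells γ₁, γ₂ provided by axiom F1), there exists a homotopy ζ₁ ∘_{γ₁} ξ₁ ⇒ ζ₂ ∘_{γ₂} ξ₂. Consequently, composition of premorphisms is, up to equivalence, independent of the choices of representatives and of the 2-cells used to compose them. -/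

import Mathlib

open CategoryTheory Bicategory CategoryTheory.Limits

universe w₂ v₂ u₂ w v u p p' t s t' s' t₁ s₁ t₂ s₂

namespace DubucStreet

variable {𝒜 : Type u} [Bicategory.{w, v} 𝒜]

/-- The LL equation for a pair of 2-cells `(α, β)` relative to `(γ₁, γ₂)`. -/
def LLeq {E A B C₁ C₂ C : 𝒜} (f : E ⟶ A) (g : E ⟶ B)
    {u₁ : A ⟶ C₁} {v₁ : B ⟶ C₁} {u₂ : A ⟶ C₂} {v₂ : B ⟶ C₂}
    (γ₁ : f ≫ u₁ ⟶ g ≫ v₁) (γ₂ : f ≫ u₂ ⟶ g ≫ v₂)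
    (w₁ : C₁ ⟶ C) (w₂ : C₂ ⟶ C)
    (α : v₁ ≫ w₁ ⟶ v₂ ≫ w₂) (β : u₁ ≫ w₁ ⟶ u₂ ≫ w₂) : Prop :=
  (α_ f u₁ w₁).inv ≫ (γ₁ ▷ w₁) ≫ (α_ g v₁ w₁).hom ≫ (g ◁ α) =
    (f ◁ β) ≫ (α_ f u₂ w₂).inv ≫ (γ₂ ▷ w₂) ≫ (α_ g v₂ w₂).hom

/-- Axiom F1 : every cospan of 1-cells can be completed to a square with an
invertible 2-cell. -/
def AxiomF1 (𝒜 : Type u) [Bicategory.{w, v} 𝒜] : Prop :=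
  ∀ {E A B : 𝒜} (f : E ⟶ A) (g : E ⟶ B),
    ∃ (C : 𝒜) (u : A ⟶ C) (v : B ⟶ C), Nonempty (f ≫ u ≅ g ≫ v)

/-- Axiom F2 : any two 2-cells as below can be equalized by a pair of invertible
2-cells satisfying the LL equation. -/
def AxiomF2 (𝒜 : Type u) [Bicategory.{w, v} 𝒜] : Prop :=
  ∀ {E A B C₁ C₂ : 𝒜} {f : E ⟶ A} {g : E ⟶ B}
    {u₁ : A ⟶ C₁} {v₁ : B ⟶ C₁} {u₂ : A ⟶ C₂} {v₂ : B ⟶ C₂}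
    (γ₁ : f ≫ u₁ ⟶ g ≫ v₁) (γ₂ : f ≫ u₂ ⟶ g ≫ v₂),
    ∃ (C : 𝒜) (w₁ : C₁ ⟶ C) (w₂ : C₂ ⟶ C)
      (α : v₁ ≫ w₁ ≅ v₂ ≫ w₂) (β : u₁ ≫ w₁ ≅ u₂ ≫ w₂),
      LLeq f g γ₁ γ₂ w₁ w₂ α.hom β.hom

/-- A premorphism `(A, x) → (B, y)` : a cospan `u : A ⟶ C`, `v : B ⟶ C` together with a
morphism `ξ : F(u)(x) ⟶ F(v)(y)` in `F(C)`. -/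
structure Premor (F : Pseudofunctor 𝒜 Cat.{v₂, u₂}) (A B : 𝒜) (x : F.obj A) (y : F.obj B) where
  cod : 𝒜
  u : A ⟶ cod
  v : B ⟶ cod
  ξ : (F.map u).toFunctor.obj x ⟶ (F.map v).toFunctor.obj y

/-- The LL equation for homotopy data `(w₁, w₂, α, β)` between two premorphisms :
`F(w₁)(ξ₁) ≫ F(α)_y = F(β)_x ≫ F(w₂)(ξ₂)`, all identifications being made via the
compositor isomorphisms of `F`. -/
def HomotopyLL (F : Pseudofunctor 𝒜 Cat.{v₂, u₂}) {A B : 𝒜} {x : F.obj A} {y : F.obj B}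
    (p q : Premor F A B x y) {V : 𝒜} (w₁ : p.cod ⟶ V) (w₂ : q.cod ⟶ V)
    (α : p.v ≫ w₁ ⟶ q.v ≫ w₂) (β : p.u ≫ w₁ ⟶ q.u ≫ w₂) : Prop :=
  (F.map w₁).toFunctor.map p.ξ ≫ (F.mapComp p.v w₁).inv.toNatTrans.app y ≫ (F.map₂ α).toNatTrans.app y ≫
      (F.mapComp q.v w₂).hom.toNatTrans.app y =
    (F.mapComp p.u w₁).inv.toNatTrans.app x ≫ (F.map₂ β).toNatTrans.app x ≫ (F.mapComp q.u w₂).hom.toNatTrans.app x ≫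
      (F.map w₂).toFunctor.map q.ξ

/-- A homotopy `(w₁, w₂, α, β)` between two premorphisms. -/
structure Homotopy (F : Pseudofunctor 𝒜 Cat.{v₂, u₂}) {A B : 𝒜} {x : F.obj A} {y : F.obj B}
    (p q : Premor F A B x y) where
  vertex : 𝒜
  w₁ : p.cod ⟶ vertex
  w₂ : q.cod ⟶ vertex
  α : p.v ≫ w₁ ≅ q.v ≫ w₂
  β : p.u ≫ w₁ ≅ q.u ≫ w₂
  ll : HomotopyLL F p q w₁ w₂ α.hom β.hom

/-- Two premorphisms are equivalent when there is a homotopy from one to the other. -/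
def PreEquiv (F : Pseudofunctor 𝒜 Cat.{v₂, u₂}) {A B : 𝒜} {x : F.obj A} {y : F.obj B}
    (p q : Premor F A B x y) : Prop :=
  Nonempty (Homotopy F p q)

/-- The composite premorphism `ζ ∘_γ ξ = (u ≫ s, F(s)(ξ) ≫ F(γ)_y ≫ F(t)(ζ), k ≫ t)`. -/
def compPremor {F : Pseudofunctor 𝒜 Cat.{v₂, u₂}} {A B C : 𝒜}
    {x : F.obj A} {y : F.obj B} {z : F.obj C}
    (p : Premor F A B x y) (q : Premor F B C y z)
    {H : 𝒜} (s : p.cod ⟶ H) (t : q.cod ⟶ H) (γ : p.v ≫ s ⟶ q.u ≫ t) :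
    Premor F A C x z where
  cod := H
  u := p.u ≫ s
  v := q.v ≫ t
  ξ := (F.mapComp p.u s).hom.toNatTrans.app x ≫ (F.map s).toFunctor.map p.ξ ≫ (F.mapComp p.v s).inv.toNatTrans.app y ≫
    (F.map₂ γ).toNatTrans.app y ≫ (F.mapComp q.u t).hom.toNatTrans.app y ≫ (F.map t).toFunctor.map q.ξ ≫
    (F.mapComp q.v t).inv.toNatTrans.app z


section Helpers
variable [Bicategory.Strict 𝒜] (F : Pseudofunctor 𝒜 Cat.{v₂, u₂})

/-- pushforward of a component morphism along a further 1-cell -/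
def push {A B C V : 𝒜} (u : A ⟶ C) (v : B ⟶ C) {x : F.obj A} {y : F.obj B}
    (φ : (F.map u).toFunctor.obj x ⟶ (F.map v).toFunctor.obj y) (w : C ⟶ V) :
    (F.map (u ≫ w)).toFunctor.obj x ⟶ (F.map (v ≫ w)).toFunctor.obj y :=
  (F.mapComp u w).hom.toNatTrans.app x ≫ (F.map w).toFunctor.map φ ≫ (F.mapComp v w).inv.toNatTrans.app y

lemma push_comp {A B D C V : 𝒜} (u : A ⟶ C) (v : B ⟶ C) (k : D ⟶ C)
    {x : F.obj A} {y : F.obj B} {z : F.obj D}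
    (φ : (F.map u).toFunctor.obj x ⟶ (F.map v).toFunctor.obj y) (ψ : (F.map v).toFunctor.obj y ⟶ (F.map k).toFunctor.obj z)
    (w : C ⟶ V) :
    push F u k (φ ≫ ψ) w = push F u v φ w ≫ push F v k ψ w := by
  simp [push]

lemma push_map₂ {A C V : 𝒜} {u v : A ⟶ C} (θ : u ⟶ v) (x : F.obj A) (w : C ⟶ V) :
    push F u v ((F.map₂ θ).toNatTrans.app x) w = (F.map₂ (θ ▷ w)).toNatTrans.app x := by
  simp [push, F.map₂_whisker_right, Cat.Hom₂.comp_app, Cat.whiskerRight_app]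

lemma push_natural {A B C V : 𝒜} (u : A ⟶ C) (v : B ⟶ C) {x : F.obj A} {y : F.obj B}
    (φ : (F.map u).toFunctor.obj x ⟶ (F.map v).toFunctor.obj y) {w w' : C ⟶ V} (θ : w ⟶ w') :
    push F u v φ w ≫ (F.map₂ (v ◁ θ)).toNatTrans.app y =
      (F.map₂ (u ◁ θ)).toNatTrans.app x ≫ push F u v φ w' := by
  simp only [push, F.map₂_whisker_left, Cat.Hom₂.comp_app, Cat.whiskerLeft_app,
    Category.assoc, Cat.Hom.inv_hom_id_toNatTrans_app_assoc]
  slice_lhs 2 3 => rw [(F.map₂ θ).toNatTrans.naturality φ]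
  simp

lemma push_congr {A B C V : 𝒜} (u : A ⟶ C) (v : B ⟶ C) {x : F.obj A} {y : F.obj B}
    (φ : (F.map u).toFunctor.obj x ⟶ (F.map v).toFunctor.obj y) {w w' : C ⟶ V} (h : w = w') :
    push F u v φ w = eqToHom (by rw [h]) ≫ push F u v φ w' ≫ eqToHom (by rw [h]) := by
  subst h; simp

lemma mapComp_app_assoc {A C D V : 𝒜} (f : A ⟶ C) (g : C ⟶ D) (h : D ⟶ V) (X : F.obj A) :
    (F.mapComp f (g ≫ h)).hom.toNatTrans.app X ≫ (F.mapComp g h).hom.toNatTrans.app ((F.map f).toFunctor.obj X) =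
      eqToHom (by simp) ≫ (F.mapComp (f ≫ g) h).hom.toNatTrans.app X ≫
        (F.map h).toFunctor.map ((F.mapComp f g).hom.toNatTrans.app X) := by
  have := NatTrans.congr_app (congrArg Cat.Hom₂.toNatTrans (F.map₂_associator f g h)) X
  simp only [Bicategory.Strict.associator_eqToIso, eqToIso.hom, PrelaxFunctor.map₂_eqToHom,
    Cat.Hom₂.comp_app, Cat.whiskerLeft_app, Cat.whiskerRight_app, Cat.eqToHom_app] at this
  calc (F.mapComp f (g ≫ h)).hom.toNatTrans.app X ≫ (F.mapComp g h).hom.toNatTrans.app ((F.map f).toFunctor.obj X)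
      = eqToHom (by simp) ≫ ((F.mapComp (f ≫ g) h).hom.toNatTrans.app X ≫
          (F.map h).toFunctor.map ((F.mapComp f g).hom.toNatTrans.app X) ≫
          eqToHom (rfl : (F.map h).toFunctor.obj ((F.map f ≫ F.map g).toFunctor.obj X) =
            (F.map g ≫ F.map h).toFunctor.obj ((F.map f).toFunctor.obj X)) ≫
          (F.mapComp g h).inv.toNatTrans.app ((F.map f).toFunctor.obj X) ≫ (F.mapComp f (g ≫ h)).inv.toNatTrans.app X) ≫
          (F.mapComp f (g ≫ h)).hom.toNatTrans.app X ≫ (F.mapComp g h).hom.toNatTrans.app ((F.map f).toFunctor.obj X) := by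
        rw [← this]; simp
    _ = eqToHom (by simp) ≫ (F.mapComp (f ≫ g) h).hom.toNatTrans.app X ≫
        (F.map h).toFunctor.map ((F.mapComp f g).hom.toNatTrans.app X) := by
        simp

lemma push_push {A B C V V' : 𝒜} (u : A ⟶ C) (v : B ⟶ C) {x : F.obj A} {y : F.obj B}
    (φ : (F.map u).toFunctor.obj x ⟶ (F.map v).toFunctor.obj y) (w : C ⟶ V) (w' : V ⟶ V') :
    push F (u ≫ w) (v ≫ w) (push F u v φ w) w' =
      eqToHom (by simp) ≫ push F u v φ (w ≫ w') ≫ eqToHom (by simp) := by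
  have h1 := mapComp_app_assoc F u w w' x
  have h2 := mapComp_app_assoc F v w w' y
  have hn := (F.mapComp w w').hom.toNatTrans.naturality φ
  simp only [push, Functor.map_comp, Category.assoc]
  rw [← cancel_mono ((F.mapComp (v ≫ w) w').hom.toNatTrans.app y)]
  rw [← cancel_epi (eqToHom (show (F.map (u ≫ w ≫ w')).toFunctor.obj x =
    (F.map ((u ≫ w) ≫ w')).toFunctor.obj x by simp))]
  simp only [Category.assoc, Cat.Hom.inv_hom_id_toNatTrans_app, Category.comp_id, eqToHom_trans_assoc,
    eqToHom_refl, Category.id_comp]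
  rw [← reassoc_of% h1, ← Cat.Hom.comp_map (F.map w) (F.map w') φ, ← reassoc_of% hn]
  have key : (F.mapComp w w').hom.toNatTrans.app ((F.map v).toFunctor.obj y) ≫
      (F.map w').toFunctor.map ((F.mapComp v w).inv.toNatTrans.app y) =
      (F.mapComp v (w ≫ w')).inv.toNatTrans.app y ≫ eqToHom (by simp) ≫
        (F.mapComp (v ≫ w) w').hom.toNatTrans.app y := by
    rw [← cancel_epi ((F.mapComp v (w ≫ w')).hom.toNatTrans.app y), reassoc_of% h2]
    simp [← Functor.map_comp]
  simp only [reassoc_of% key]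
  simp

lemma homotopyLL_iff {A B : 𝒜} {x : F.obj A} {y : F.obj B}
    (p q : Premor F A B x y) {V : 𝒜} (w₁ : p.cod ⟶ V) (w₂ : q.cod ⟶ V)
    (α : p.v ≫ w₁ ⟶ q.v ≫ w₂) (β : p.u ≫ w₁ ⟶ q.u ≫ w₂) :
    HomotopyLL F p q w₁ w₂ α β ↔
      push F p.u p.v p.ξ w₁ ≫ (F.map₂ α).toNatTrans.app y =
        (F.map₂ β).toNatTrans.app x ≫ push F q.u q.v q.ξ w₂ := by
  unfold HomotopyLL push
  constructor <;> intro h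
  · rw [← cancel_mono ((F.mapComp q.v w₂).hom.toNatTrans.app y)]
    simp only [Category.assoc, Cat.Hom.inv_hom_id_toNatTrans_app, Category.comp_id]
    rw [h]
    simp
  · rw [← cancel_epi ((F.mapComp p.u w₁).hom.toNatTrans.app x)]
    rw [← cancel_mono ((F.mapComp q.v w₂).inv.toNatTrans.app y)]
    simp only [Category.assoc, Cat.Hom.hom_inv_id_toNatTrans_app, Category.comp_id,
      Cat.Hom.hom_inv_id_toNatTrans_app_assoc]
    simpa using h

lemma compPremor_ξ {A B C : 𝒜} {x : F.obj A} {y : F.obj B} {z : F.obj C}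
    (p : Premor F A B x y) (q : Premor F B C y z)
    {H : 𝒜} (s : p.cod ⟶ H) (t : q.cod ⟶ H) (γ : p.v ≫ s ⟶ q.u ≫ t) :
    (compPremor p q s t γ).ξ =
      push F p.u p.v p.ξ s ≫ (F.map₂ γ).toNatTrans.app y ≫ push F q.u q.v q.ξ t := by
  simp [compPremor, push]
  rfl

end Helpers

set_option maxHeartbeats 3200000

/-- Horizontal composition of homotopies : given homotopies `ξ₁ ⇒ ξ₂` and `ζ₁ ⇒ ζ₂`,
any two composites `ζ₁ ∘_{γ₁} ξ₁` and `ζ₂ ∘_{γ₂} ξ₂` are homotopic. Consequently,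
composition of premorphisms is, up to equivalence, independent of the choices of
representatives and of the 2-cells used to compose them. -/
theorem horizontal_composition_of_homotopies [Bicategory.Strict 𝒜]
    (h1 : AxiomF1 𝒜) (h2 : AxiomF2 𝒜)
    (F : Pseudofunctor 𝒜 Cat.{v₂, u₂}) {A B C : 𝒜}
    {x : F.obj A} {y : F.obj B} {z : F.obj C}
    (p₁ p₂ : Premor F A B x y) (q₁ q₂ : Premor F B C y z)
    (hp : Homotopy F p₁ p₂) (hq : Homotopy F q₁ q₂)
    {H₁ : 𝒜} (s₁ : p₁.cod ⟶ H₁) (t₁ : q₁.cod ⟶ H₁) (γ₁ : p₁.v ≫ s₁ ≅ q₁.u ≫ t₁)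
    {H₂ : 𝒜} (s₂ : p₂.cod ⟶ H₂) (t₂ : q₂.cod ⟶ H₂) (γ₂ : p₂.v ≫ s₂ ≅ q₂.u ≫ t₂) :
    PreEquiv F (compPremor p₁ q₁ s₁ t₁ γ₁.hom) (compPremor p₂ q₂ s₂ t₂ γ₂.hom) := by
  show PreEquiv F ⟨H₁, p₁.u ≫ s₁, q₁.v ≫ t₁, (compPremor p₁ q₁ s₁ t₁ γ₁.hom).ξ⟩
    ⟨H₂, p₂.u ≫ s₂, q₂.v ≫ t₂, (compPremor p₂ q₂ s₂ t₂ γ₂.hom).ξ⟩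
  obtain ⟨W, w₁, w₂, α, β, hpll⟩ := hp
  obtain ⟨R, r₁, r₂, εh, δ, hqll⟩ := hq
  obtain ⟨N, m, n, ⟨σ⟩⟩ := h1 w₂ s₂
  obtain ⟨P, o, e, ⟨τ⟩⟩ := h1 r₂ (t₂ ≫ n)
  -- the comparison 2-cell used for axiom F2
  let γ' : p₁.v ≫ w₁ ≫ m ≫ e ⟶ q₁.u ≫ r₁ ≫ o :=
    eqToHom (by first | rfl | simp [compPremor, Bicategory.Strict.assoc]) ≫ α.hom ▷ (m ≫ e) ≫
      eqToHom (by first | rfl | simp [compPremor, Bicategory.Strict.assoc]) ≫ p₂.v ◁ (σ.hom ▷ e) ≫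
      eqToHom (by first | rfl | simp [compPremor, Bicategory.Strict.assoc]) ≫ γ₂.hom ▷ (n ≫ e) ≫
      eqToHom (by first | rfl | simp [compPremor, Bicategory.Strict.assoc]) ≫ q₂.u ◁ τ.inv ≫
      eqToHom (by first | rfl | simp [compPremor, Bicategory.Strict.assoc]) ≫ δ.inv ▷ o ≫
      eqToHom (by first | rfl | simp [compPremor, Bicategory.Strict.assoc])
  obtain ⟨V, a₁, b, A, B, hLL⟩ := h2 γ₁.hom γ'
  refine ⟨⟨V, a₁, n ≫ e ≫ b,
    eqToIso (by first | rfl | simp [compPremor, Bicategory.Strict.assoc]) ≪≫ whiskerLeftIso q₁.v A ≪≫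
      eqToIso (by first | rfl | simp [compPremor, Bicategory.Strict.assoc]) ≪≫
      whiskerRightIso (whiskerRightIso εh o) b ≪≫
      eqToIso (by first | rfl | simp [compPremor, Bicategory.Strict.assoc]) ≪≫
      whiskerLeftIso q₂.v (whiskerRightIso τ b) ≪≫
      eqToIso (by first | rfl | simp [compPremor, Bicategory.Strict.assoc]),
    eqToIso (by first | rfl | simp [compPremor, Bicategory.Strict.assoc]) ≪≫ whiskerLeftIso p₁.u B ≪≫
      eqToIso (by first | rfl | simp [compPremor, Bicategory.Strict.assoc]) ≪≫
      whiskerRightIso (whiskerRightIso (whiskerRightIso β m) e) b ≪≫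
      eqToIso (by first | rfl | simp [compPremor, Bicategory.Strict.assoc]) ≪≫
      whiskerLeftIso p₂.u (whiskerRightIso (whiskerRightIso σ e) b) ≪≫
      eqToIso (by first | rfl | simp [compPremor, Bicategory.Strict.assoc]), ?_⟩⟩
  refine (homotopyLL_iff F _ _ _ _ _ _).mpr ?_
  dsimp only
  simp only [compPremor_ξ, Iso.trans_hom, eqToIso.hom, whiskerLeftIso_hom,
    whiskerRightIso_hom, PrelaxFunctor.map₂_comp, PrelaxFunctor.map₂_eqToHom,
    Cat.Hom₂.comp_app, Cat.eqToHom_app, push_comp, push_map₂, Category.assoc]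
  simp only [compPremor, push_push, Category.assoc, eqToHom_trans, eqToHom_trans_assoc,
    eqToHom_refl, Category.id_comp, Category.comp_id]
  -- pushed homotopy equations
  have Hq0 := (homotopyLL_iff F q₁ q₂ r₁ r₂ εh.hom δ.hom).mp hqll
  have Hp0 := (homotopyLL_iff F p₁ p₂ w₁ w₂ α.hom β.hom).mp hpll
  have Hq1 := congrArg (fun φ => push F (q₁.u ≫ r₁) (q₂.v ≫ r₂) φ (o ≫ b)) Hq0
  have Hp1 := congrArg (fun φ => push F (p₁.u ≫ w₁) (p₂.v ≫ w₂) φ (m ≫ e ≫ b)) Hp0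
  simp only [push_comp, push_map₂, push_push, Category.assoc] at Hq1 Hp1
  -- component-level rebracketing of whiskered 2-cells
  have cell : ∀ {X Y : 𝒜} {f g : X ⟶ Y} (θ θ' : f ⟶ g) (hθ : θ = θ') (w : F.obj X),
      (F.map₂ θ).toNatTrans.app w = (F.map₂ θ').toNatTrans.app w := by rintro _ _ _ _ θ _ rfl _; rfl
  have εhc : (F.map₂ (εh.hom ▷ o ▷ b)).toNatTrans.app z =
      eqToHom (by simp [Bicategory.Strict.assoc]) ≫ (F.map₂ (εh.hom ▷ (o ≫ b))).toNatTrans.app z ≫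
        eqToHom (by simp [Bicategory.Strict.assoc]) := by
    rw [cell _ (eqToHom (by simp [Bicategory.Strict.assoc]) ≫ εh.hom ▷ (o ≫ b) ≫
      eqToHom (by simp [Bicategory.Strict.assoc]))
      (by simp [Bicategory.whiskerRight_comp, Bicategory.Strict.associator_eqToIso])]
    simp [PrelaxFunctor.map₂_eqToHom, Cat.Hom₂.comp_app, Cat.eqToHom_app]
  have βc : (F.map₂ (β.hom ▷ m ▷ e ▷ b)).toNatTrans.app x =
      eqToHom (by simp [Bicategory.Strict.assoc]) ≫ (F.map₂ (β.hom ▷ (m ≫ e ≫ b))).toNatTrans.app x ≫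
        eqToHom (by simp [Bicategory.Strict.assoc]) := by
    rw [cell _ (eqToHom (by simp [Bicategory.Strict.assoc]) ≫ β.hom ▷ (m ≫ e ≫ b) ≫
      eqToHom (by simp [Bicategory.Strict.assoc]))
      (by simp [Bicategory.whiskerRight_comp, Bicategory.Strict.associator_eqToIso])]
    simp [PrelaxFunctor.map₂_eqToHom, Cat.Hom₂.comp_app, Cat.eqToHom_app]
  -- step 1 : move ζ₁ past A
  rw [reassoc_of% (push_natural F q₁.u q₁.v q₁.ξ A.hom)]
  rw [push_congr F q₁.u q₁.v q₁.ξ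
    (show (r₁ ≫ o) ≫ b = r₁ ≫ o ≫ b by simp [Bicategory.Strict.assoc])]
  rw [εhc]
  simp only [Category.assoc, eqToHom_trans, eqToHom_trans_assoc, eqToHom_refl,
    Category.id_comp, Category.comp_id]
  -- step 2 : pushed hq
  rw [eqToHom_comp_iff] at Hq1
  rw [reassoc_of% Hq1]
  rw [push_congr F q₂.u q₂.v q₂.ξ
    (show r₂ ≫ o ≫ b = (r₂ ≫ o) ≫ b by simp [Bicategory.Strict.assoc])]
  simp only [Category.assoc, eqToHom_trans, eqToHom_trans_assoc, eqToHom_refl,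
    Category.id_comp, Category.comp_id]
  -- step 3 : move ζ₂ past τ
  rw [reassoc_of% (push_natural F q₂.u q₂.v q₂.ξ (τ.hom ▷ b))]
  rw [push_congr F q₂.u q₂.v q₂.ξ
    (show ((t₂ ≫ n) ≫ e) ≫ b = t₂ ≫ n ≫ e ≫ b by simp [Bicategory.Strict.assoc])]
  simp only [Category.assoc, eqToHom_trans, eqToHom_trans_assoc, eqToHom_refl,
    Category.id_comp, Category.comp_id]
  -- whisker eqToHom lemmas in 𝒜
  have ew : ∀ {X Y Z : 𝒜} {f f' : X ⟶ Y} (h : f = f') (g : Y ⟶ Z),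
      (eqToHom h) ▷ g = eqToHom (by rw [h]) := by
    rintro _ _ _ f _ rfl g; simp
  have lw : ∀ {X Y Z : 𝒜} (g : X ⟶ Y) {f f' : Y ⟶ Z} (h : f = f'),
      g ◁ (eqToHom h) = eqToHom (by rw [h]) := by
    rintro _ _ _ g f _ rfl; simp
  have cancδ : ((δ.inv ▷ o) ▷ b) ≫ ((δ.hom ▷ o) ▷ b) = 𝟙 _ := by
    simp [← comp_whiskerRight]
  have cancτ : (q₂.u ◁ (τ.inv ▷ b)) ≫ (q₂.u ◁ (τ.hom ▷ b)) = 𝟙 _ := by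
    simp [← Bicategory.whiskerLeft_comp, ← comp_whiskerRight]
  have KEY2 : eqToHom (by simp [Bicategory.Strict.assoc]) ≫ (γ₁.hom ▷ a₁) ≫
        eqToHom (by simp [Bicategory.Strict.assoc]) ≫ (q₁.u ◁ A.hom) ≫
        eqToHom (by simp [Bicategory.Strict.assoc]) ≫ (δ.hom ▷ (o ≫ b)) ≫
        eqToHom (by simp [Bicategory.Strict.assoc]) ≫ (q₂.u ◁ (τ.hom ▷ b)) ≫
        (eqToHom (by simp [Bicategory.Strict.assoc]) :
          q₂.u ≫ ((t₂ ≫ n) ≫ e) ≫ b ⟶ q₂.u ≫ t₂ ≫ n ≫ e ≫ b) =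
      (p₁.v ◁ B.hom) ≫ eqToHom (by simp [Bicategory.Strict.assoc]) ≫
        (α.hom ▷ (m ≫ e ≫ b)) ≫ eqToHom (by simp [Bicategory.Strict.assoc]) ≫
        (p₂.v ◁ (σ.hom ▷ e ▷ b)) ≫ eqToHom (by simp [Bicategory.Strict.assoc]) ≫
        (γ₂.hom ▷ (n ≫ e ≫ b)) ≫ eqToHom (by simp [Bicategory.Strict.assoc]) := by
    have hLL' := hLL
    simp only [LLeq, Bicategory.Strict.associator_eqToIso, eqToIso.hom, eqToIso.inv] at hLL'
    rw [reassoc_of% hLL']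
    simp only [γ', comp_whiskerRight, Category.assoc, ew, lw, eqToHom_trans,
      eqToHom_trans_assoc, eqToHom_refl, Category.id_comp, Category.comp_id,
      Bicategory.whiskerRight_comp, Bicategory.whisker_assoc,
      Bicategory.Strict.associator_eqToIso, eqToIso.hom, eqToIso.inv]
    simp only [reassoc_of% cancδ, eqToHom_trans, eqToHom_trans_assoc, eqToHom_refl,
      Category.id_comp, Category.comp_id]
    simp only [reassoc_of% cancτ, eqToHom_trans, eqToHom_trans_assoc, eqToHom_refl,
      Category.id_comp, Category.comp_id]
  have KEYc := NatTrans.congr_app (congrArg Cat.Hom₂.toNatTrans (congrArg F.map₂ KEY2)) y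
  simp only [PrelaxFunctor.map₂_comp, PrelaxFunctor.map₂_eqToHom, Cat.Hom₂.comp_app,
    Cat.eqToHom_app, Category.assoc] at KEYc
  rw [reassoc_of% KEYc]
  rw [reassoc_of% (push_natural F p₁.u p₁.v p₁.ξ B.hom)]
  rw [push_congr F p₁.u p₁.v p₁.ξ
    (show (w₁ ≫ m ≫ e) ≫ b = w₁ ≫ m ≫ e ≫ b by simp [Bicategory.Strict.assoc])]
  simp only [Category.assoc, eqToHom_trans, eqToHom_trans_assoc, eqToHom_refl,
    Category.id_comp, Category.comp_id]
  rw [eqToHom_comp_iff] at Hp1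
  rw [reassoc_of% Hp1]
  rw [push_congr F p₂.u p₂.v p₂.ξ
    (show w₂ ≫ m ≫ e ≫ b = ((w₂ ≫ m) ≫ e) ≫ b by simp [Bicategory.Strict.assoc])]
  simp only [Category.assoc, eqToHom_trans, eqToHom_trans_assoc, eqToHom_refl,
    Category.id_comp, Category.comp_id]
  rw [reassoc_of% (push_natural F p₂.u p₂.v p₂.ξ (σ.hom ▷ e ▷ b))]
  rw [push_congr F p₂.u p₂.v p₂.ξ
    (show ((s₂ ≫ n) ≫ e) ≫ b = s₂ ≫ n ≫ e ≫ b by simp [Bicategory.Strict.assoc])]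
  rw [βc]
  simp only [Category.assoc, eqToHom_trans, eqToHom_trans_assoc, eqToHom_refl,
    Category.id_comp, Category.comp_id]

end DubucStreet
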